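/- Let X, Y be analytic subsets of standard Borel spaces, K : X → Y an analytic map, E a Borel equivalence relation on X, and (F_α)_{α<ω₁} a uniformly analytic refining family of equivalence relations on Y with intersection F_∞. If K(x) F_∞ K(x') implies x E x' for all x, x' ∈ X, then there exists β < ω₁ such that K(x) F_β K(x') already implies x E x' for all x, x' ∈ X. -/
import Mathlib


/-- A subset of a measurable space is *analytic* if it is the image of a Borel
subset of Baire space under a Borel map. -/
def IsAnalyticSet {X : Type*} [MeasurableSpace X] (s : Set X) : Prop :=
  ∃ (B : Set (ℕ → ℕ)) (f : (ℕ → ℕ) → X), MeasurableSet B ∧ Measurable f ∧ f '' B = s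

/-- Codes for linear orders on subsets of ω. -/
abbrev LOCode : Type := (ℕ → Bool) × (ℕ × ℕ → Bool)

namespace LOCode

def dom (I : LOCode) (n : ℕ) : Prop := I.1 n = true

def le (I : LOCode) (m n : ℕ) : Prop := I.2 (m, n) = true

def IsLO (I : LOCode) : Prop :=
  (∀ m n, I.le m n → I.dom m ∧ I.dom n) ∧
  (∀ m, I.dom m → I.le m m) ∧
  (∀ m n, I.le m n → I.le n m → m = n) ∧
  (∀ m n k, I.le m n → I.le n k → I.le m k) ∧
  (∀ m n, I.dom m → I.dom n → I.le m n ∨ I.le n m)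

def IsWO (I : LOCode) : Prop :=
  I.IsLO ∧ ∀ s : Set ℕ, s.Nonempty → (∀ n ∈ s, I.dom n) → ∃ m ∈ s, ∀ n ∈ s, I.le m n

/-- `I` embeds (as a linear order) into `J`. -/
def Embeds (I J : LOCode) : Prop :=
  ∃ f : ℕ → ℕ, (∀ n, I.dom n → J.dom (f n)) ∧
    ∀ m n, I.dom m → I.dom n → (I.le m n ↔ J.le (f m) (f n))

/-- `ω*`, the reversed order on all of ω. -/
def omegaStar : LOCode := (fun _ => true, fun p => decide (p.2 ≤ p.1))

end LOCode

/-- The section of a family `R ⊆ X × LO` at a linear order code `I`. -/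
def LOsection {X : Type*} (R : Set (X × LOCode)) (I : LOCode) : Set X :=
  {x | (x, I) ∈ R}

/-- A family `R ⊆ X × LO` is *refining* if `R_I ⊇ R_{I'}` whenever the linear
order `I` embeds into `I'`. -/
def Refining {X : Type*} (R : Set (X × LOCode)) : Prop :=
  ∀ I J : LOCode, I.IsLO → J.IsLO → LOCode.Embeds I J →
    LOsection R J ⊆ LOsection R I


/-- `E ⊆ α × α` is an equivalence relation on the subset `A`. -/
def IsEquivOn {α : Type*} (A : Set α) (E : Set (α × α)) : Prop :=
  (∀ a ∈ A, (a, a) ∈ E) ∧ (∀ a b, (a, b) ∈ E → (b, a) ∈ E) ∧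
  (∀ a b c, (a, b) ∈ E → (b, c) ∈ E → (a, c) ∈ E)


namespace Transfer
open MeasureTheory Set


/-- Kleene–Brouwer strict order on finite sequences. -/
def kbLT (s t : List ℕ) : Prop :=
  (t <+: s ∧ s ≠ t) ∨
    ∃ i, i < s.length ∧ i < t.length ∧ s.take i = t.take i ∧ s.getD i 0 < t.getD i 0

def kbLE (s t : List ℕ) : Prop := s = t ∨ kbLT s t

lemma getD_take_eq {s t : List ℕ} {k : ℕ} (h : s.take k = t.take k) {i : ℕ} (hi : i < k) :
    s.getD i 0 = t.getD i 0 := by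
  have : (s.take k).getD i 0 = (t.take k).getD i 0 := by rw [h]
  simpa [List.getD_eq_getElem?_getD, List.getElem?_take, hi] using this

lemma prefix_getD {s u : List ℕ} (h : s <+: u) {i : ℕ} (hi : i < s.length) :
    u.getD i 0 = s.getD i 0 := by
  rcases h with ⟨r, rfl⟩
  simp [List.getD_eq_getElem?_getD, List.getElem?_append_left hi]

lemma take_eq_of_prefix {s u : List ℕ} (h : s <+: u) {k : ℕ} (hk : k ≤ s.length) :
    u.take k = s.take k := by
  rcases h with ⟨r, rfl⟩
  rw [List.take_append_of_le_length hk]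

lemma length_lt_of_prefix_ne {s t : List ℕ} (h : s <+: t) (h2 : s ≠ t) : s.length < t.length := by
  rcases h with ⟨r, rfl⟩
  rcases r with _|⟨a,r⟩
  · simp at h2
  · simp

/-- first-difference trichotomy -/
lemma kb_trichotomy (s t : List ℕ) : s <+: t ∨ t <+: s ∨
    ∃ i, i < s.length ∧ i < t.length ∧ s.take i = t.take i ∧ s.getD i 0 ≠ t.getD i 0 := by
  induction s generalizing t with
  | nil => exact Or.inl (List.nil_prefix)
  | cons a s ih =>
    cases t with
    | nil => exact Or.inr (Or.inl List.nil_prefix)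
    | cons b t =>
      by_cases hab : a = b
      · subst hab
        rcases ih t with h | h | ⟨i, h1, h2, h3, h4⟩
        · exact Or.inl (List.cons_prefix_cons.2 ⟨rfl, h⟩)
        · exact Or.inr (Or.inl (List.cons_prefix_cons.2 ⟨rfl, h⟩))
        · refine Or.inr (Or.inr ⟨i+1, by simpa using h1, by simpa using h2, ?_, ?_⟩)
          · simp [h3]
          · simpa using h4
      · exact Or.inr (Or.inr ⟨0, by simp, by simp, by simp, by simpa using hab⟩)

lemma kb_total (s t : List ℕ) : kbLE s t ∨ kbLE t s := by
  rcases kb_trichotomy s t with h | h | ⟨i, h1, h2, h3, h4⟩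
  · by_cases he : s = t
    · exact Or.inl (Or.inl he)
    · exact Or.inr (Or.inr (Or.inl ⟨h, fun hh => he hh.symm⟩))
  · by_cases he : s = t
    · exact Or.inl (Or.inl he)
    · exact Or.inl (Or.inr (Or.inl ⟨h, he⟩))
  · rcases lt_or_gt_of_ne h4 with hlt | hlt
    · exact Or.inl (Or.inr (Or.inr ⟨i, h1, h2, h3, hlt⟩))
    · exact Or.inr (Or.inr (Or.inr ⟨i, h2, h1, h3.symm, hlt⟩))

lemma kbLT_asymm {s t : List ℕ} (h : kbLT s t) (h' : kbLT t s) : False := by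
  rcases h with ⟨hp, hne⟩ | ⟨i, hi1, hi2, hi3, hi4⟩
  · rcases h' with ⟨hp', hne'⟩ | ⟨j, hj1, hj2, hj3, hj4⟩
    · exact hne (hp.eq_of_length_le hp'.length_le).symm
    · have := prefix_getD hp hj1
      omega
  · rcases h' with ⟨hp', hne'⟩ | ⟨j, hj1, hj2, hj3, hj4⟩
    · have := prefix_getD hp' hi1
      omega
    · rcases lt_trichotomy i j with hij | rfl | hij
      · have := getD_take_eq hj3 hij
        omega
      · omega
      · have := getD_take_eq hi3 hij
        omega

lemma kbLT_irrefl (s : List ℕ) : ¬ kbLT s s := fun h => kbLT_asymm h h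

lemma kbLE_antisymm {s t : List ℕ} (h : kbLE s t) (h' : kbLE t s) : s = t := by
  rcases h with rfl | h
  · rfl
  rcases h' with rfl | h'
  · rfl
  exact absurd (kbLT_asymm h h') not_false

lemma kbLT_trans {s t u : List ℕ} (h : kbLT s t) (h' : kbLT t u) : kbLT s u := by
  rcases h with ⟨hp, hne⟩ | ⟨i, hi1, hi2, hi3, hi4⟩
  · rcases h' with ⟨hp', hne'⟩ | ⟨j, hj1, hj2, hj3, hj4⟩
    · -- t <+: s, u <+: t
      refine Or.inl ⟨hp'.trans hp, fun he => ?_⟩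
      subst he
      exact hne (hp.eq_of_length_le hp'.length_le).symm
    · -- t <+: s proper; t,u differ at j, t[j] < u[j]; j < t.length ≤ s.length
      have hjs : j < s.length := lt_of_lt_of_le hj1 hp.length_le
      refine Or.inr ⟨j, hjs, hj2, ?_, ?_⟩
      · rw [take_eq_of_prefix hp (le_of_lt hj1)]  -- s.take j = t.take j? careful direction
        exact hj3
      · rw [prefix_getD hp hj1]
        exact hj4
  · rcases h' with ⟨hp', hne'⟩ | ⟨j, hj1, hj2, hj3, hj4⟩
    · -- s,t differ at i; u <+: t proper
      by_cases hiu : i < u.length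
      · refine Or.inr ⟨i, hi1, hiu, ?_, ?_⟩
        · rw [hi3, take_eq_of_prefix hp' (le_of_lt hiu)]
        · rw [← prefix_getD hp' hiu]
          exact hi4
      · -- u.length ≤ i : u is a prefix of s, proper
        push_neg at hiu
        refine Or.inl ⟨?_, ?_⟩
        · have h1 : u = t.take u.length := (List.prefix_iff_eq_take).1 hp'
          have h2 : t.take u.length = s.take u.length := by
            have := hi3
            have h3 : s.take u.length = (s.take i).take u.length := by
              rw [List.take_take, min_eq_left hiu]
            have h4 : t.take u.length = (t.take i).take u.length := by
              rw [List.take_take, min_eq_left hiu]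
            rw [h3, h4, hi3]
          exact List.prefix_iff_eq_take.2 (h1.trans h2)
        · intro he
          subst he
          omega
    · rcases lt_trichotomy i j with hij | rfl | hij
      · refine Or.inr ⟨i, hi1, lt_trans hij hj2, ?_, ?_⟩
        · rw [hi3]
          have : t.take i = (t.take j).take i := by rw [List.take_take, min_eq_left (le_of_lt hij)]
          rw [this, hj3, List.take_take, min_eq_left (le_of_lt hij)]
        · rw [← getD_take_eq hj3 hij]
          exact hi4
      · exact Or.inr ⟨i, hi1, hj2, hi3.trans hj3, lt_trans hi4 hj4⟩
      · refine Or.inr ⟨j, lt_trans hij hi1, hj2, ?_, ?_⟩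
        · have : s.take j = (s.take i).take j := by rw [List.take_take, min_eq_left (le_of_lt hij)]
          rw [this, hi3, List.take_take, min_eq_left (le_of_lt hij), hj3]
        · rw [getD_take_eq hi3 hij]
          exact hj4

lemma kbLE_trans {s t u : List ℕ} (h : kbLE s t) (h' : kbLE t u) : kbLE s u := by
  rcases h with rfl | h
  · exact h'
  rcases h' with rfl | h'
  · exact Or.inr h
  · exact Or.inr (kbLT_trans h h')

lemma kbLT_of_kbLE_ne {s t : List ℕ} (h : kbLE s t) (hne : s ≠ t) : kbLT s t := by
  rcases h with rfl | h
  · exact absurd rfl hne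
  · exact h

/-- a proper extension is KB-smaller -/
lemma kbLT_of_prefix {s t : List ℕ} (h : t <+: s) (hne : s ≠ t) : kbLT s t := Or.inl ⟨h, hne⟩

def pref (x : ℕ → ℕ) (n : ℕ) : List ℕ := (List.range n).map x

@[simp] lemma pref_length (x : ℕ → ℕ) (n : ℕ) : (pref x n).length = n := by simp [pref]

lemma pref_succ (x : ℕ → ℕ) (n : ℕ) : pref x (n+1) = pref x n ++ [x n] := by
  simp [pref, List.range_succ]

lemma pref_take (x : ℕ → ℕ) {m n : ℕ} (h : m ≤ n) : (pref x n).take m = pref x m := by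
  simp [pref, ← List.map_take, List.take_range, min_eq_left h]

lemma pref_prefix (x : ℕ → ℕ) {m n : ℕ} (h : m ≤ n) : pref x m <+: pref x n := by
  rw [List.prefix_iff_eq_take, pref_length, pref_take x h]

lemma kbLT_nil {t : List ℕ} : ¬ kbLT t [] → t = [] := by
  intro h
  by_contra hne
  exact h (Or.inl ⟨List.nil_prefix, hne⟩)

lemma not_kbLT_nil {t : List ℕ} : ¬ kbLT [] t := by
  rintro (⟨hp, hne⟩ | ⟨i, hi, _⟩)
  · exact hne (List.prefix_nil.1 hp).symm
  · simp at hi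

lemma append_singleton_prefix {t u : List ℕ} (h : t <+: u) (hl : t.length < u.length) :
    t ++ [u.getD t.length 0] <+: u := by
  rw [List.prefix_iff_eq_take]
  have h1 : u.take t.length = t := by
    rw [take_eq_of_prefix h le_rfl, List.take_length]
  have h2 : u[t.length]? = some (u.getD t.length 0) := by
    rw [List.getElem?_eq_getElem hl, List.getD_eq_getElem u 0 hl]
  calc t ++ [u.getD t.length 0] = u.take t.length ++ u[t.length]?.toList := by
        rw [h1, h2]; rfl
    _ = u.take (t.length + 1) := (List.take_succ).symm
    _ = u.take (t ++ [u.getD t.length 0]).length := by simp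

/-- From a KB-descending sequence in a prefix-closed tree, extract a branch. -/
lemma branch_of_descending {T : Set (List ℕ)}
    (Tclosed : ∀ t ∈ T, ∀ k, t.take k ∈ T)
    (f : ℕ → List ℕ) (hfT : ∀ n, f n ∈ T) (hdesc : ∀ n, kbLT (f (n+1)) (f n)) :
    ∃ y : ℕ → ℕ, ∀ n, pref y n ∈ T := by
  have hchain : ∀ a b, a < b → kbLT (f b) (f a) := by
    intro a b hab
    induction b with
    | zero => omega
    | succ b ih =>
      rcases Nat.lt_succ_iff_lt_or_eq.1 hab with h | h
      · exact kbLT_trans (hdesc b) (ih h)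
      · subst h; exact hdesc a
  have hne : ∀ a b, a < b → f b ≠ f a := by
    intro a b hab he
    exact kbLT_irrefl _ (he ▸ hchain a b hab)
  have stab : ∀ k, ∃ N : ℕ, ∃ t : List ℕ, t.length = k ∧
      ∀ n, N ≤ n → t <+: f n ∧ t ≠ f n := by
    intro k
    induction k with
    | zero =>
      refine ⟨1, [], rfl, fun n hn => ⟨List.nil_prefix, fun he => ?_⟩⟩
      -- f n = [] with n ≥ 1 : then kbLT (f n) (f (n-1)) fine, but kbLT (f (n+1)) (f n) = kbLT _ [] ok..
      have h1 : kbLT (f n) (f (n-1)) := by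
        have := hchain (n-1) n (by omega)
        exact this
      rw [← he] at h1
      exact not_kbLT_nil h1
    | succ k ih =>
      obtain ⟨N, t, htl, hpt⟩ := ih
      set g : ℕ → ℕ := fun n => (f n).getD k 0 with hg
      have hlen : ∀ n, N ≤ n → k < (f n).length := by
        intro n hn
        have := length_lt_of_prefix_ne (hpt n hn).1 (hpt n hn).2
        omega
      have mono : ∀ n, N ≤ n → g (n+1) ≤ g n := by
        intro n hn
        have hp1 := (hpt n hn).1
        have hp2 := (hpt (n+1) (by omega)).1
        rcases hdesc n with ⟨hp, hne'⟩ | ⟨i, hi1, hi2, hi3, hi4⟩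
        · -- f n <+: f (n+1)
          have := prefix_getD hp (hlen n hn)
          simp only [hg]; omega
        · -- first difference at i
          rcases lt_trichotomy i k with hik | rfl | hik
          · exfalso
            have e1 : (f n).getD i 0 = t.getD i 0 := prefix_getD hp1 (by omega)
            have e2 : (f (n+1)).getD i 0 = t.getD i 0 := prefix_getD hp2 (by omega)
            omega
          · exact le_of_lt hi4
          · have := getD_take_eq hi3 (show k < i from hik)
            simp only [hg]; omega
      have chain : ∀ a b, N ≤ a → a ≤ b → g b ≤ g a := by
        intro a b ha hab
        induction b, hab using Nat.le_induction with
        | base => exact le_rfl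
        | succ b hab ih2 => exact le_trans (mono b (by omega)) ih2
      -- minimum value
      have hVne : ∃ v, ∃ n, N ≤ n ∧ g n = v := ⟨g N, N, le_rfl, rfl⟩
      classical
      let v := Nat.find hVne
      obtain ⟨N1, hN1, hgN1⟩ := Nat.find_spec hVne
      have hconst : ∀ n, N1 ≤ n → g n = v := by
        intro n hn
        have h1 : g n ≤ v := le_trans (chain N1 n hN1 hn) (le_of_eq hgN1)
        have h2 : v ≤ g n := Nat.find_le ⟨n, by omega, rfl⟩
        omega
      set t' : List ℕ := t ++ [v] with ht'
      have ht'len : t'.length = k + 1 := by simp [ht', htl]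
      have hpre : ∀ n, N1 ≤ n → t' <+: f n := by
        intro n hn
        have h1 := (hpt n (by omega)).1
        have h2 := append_singleton_prefix h1 (htl ▸ hlen n (by omega))
        rw [htl] at h2
        have : (f n).getD k 0 = v := hconst n hn
        rwa [this] at h2
      by_cases hex : ∃ a, N1 ≤ a ∧ f a = t'
      · obtain ⟨a, ha, hfa⟩ := hex
        refine ⟨a + 1, t', ht'len, fun n hn => ⟨hpre n (by omega), fun he => ?_⟩⟩
        exact hne a n (by omega) (by rw [hfa, he])
      · push_neg at hex
        exact ⟨N1, t', ht'len, fun n hn => ⟨hpre n hn, fun he => hex n hn he.symm⟩⟩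
  classical
  choose N t htl hpt using stab
  have coh : ∀ k, t k <+: t (k+1) := by
    intro k
    have h1 := (hpt k (max (N k) (N (k+1))) (le_max_left _ _)).1
    have h2 := (hpt (k+1) (max (N k) (N (k+1))) (le_max_right _ _)).1
    exact List.prefix_of_prefix_length_le h1 h2 (by rw [htl, htl]; omega)
  set y : ℕ → ℕ := fun k => (t (k+1)).getD k 0 with hy
  have hpy : ∀ n, pref y n = t n := by
    intro n
    induction n with
    | zero => simp [pref, (List.length_eq_zero_iff).1 (htl 0)]
    | succ n ih =>
      obtain ⟨r, hr⟩ := coh n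
      have hrlen : r.length = 1 := by
        have := htl n; have := htl (n+1)
        have : (t n).length + r.length = (t (n+1)).length := by rw [← hr]; simp
        omega
      obtain ⟨r0, rfl⟩ : ∃ r0, r = [r0] := by
        cases r with
        | nil => simp at hrlen
        | cons a r' => cases r' with
          | nil => exact ⟨a, rfl⟩
          | cons b r'' => simp at hrlen
      have hyval : y n = r0 := by
        have : (t (n+1)).getD n 0 = r0 := by
          rw [← hr]
          have : (t n).length = n := htl n
          simp [List.getD_eq_getElem?_getD, List.getElem?_append_right, this]
        simpa [hy] using this
      rw [pref_succ, ih, hyval, hr]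
  refine ⟨y, fun n => ?_⟩
  rw [hpy n]
  have h1 := (hpt n (N n) le_rfl).1
  have h2 : (f (N n)).take n = t n := by
    rw [take_eq_of_prefix h1 (le_of_eq (htl n).symm), List.take_of_length_le (le_of_eq (htl n))]
  rw [← h2]
  exact Tclosed _ (hfT (N n)) n


noncomputable def tb (p : Prop) : Bool := @decide p (Classical.propDecidable p)

@[simp] lemma tb_iff {p : Prop} : tb p = true ↔ p := by
  simp [tb, @decide_eq_true_iff p (Classical.propDecidable p)]

lemma tb_congr {p q : Prop} (h : p ↔ q) : tb p = tb q := by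
  by_cases hp : p
  · rw [tb_iff.2 hp, (tb_iff.2 (h.1 hp)).symm]  -- messy; fix below
  · have h1 : tb p = false := by
      cases hvp : tb p
      · rfl
      · exact absurd (tb_iff.1 hvp) hp
    have h2 : tb q = false := by
      cases hvq : tb q
      · rfl
      · exact absurd (h.2 (tb_iff.1 hvq)) hp
    rw [h1, h2]

def cpred (c : ℕ → ℕ) (s t : List ℕ) : Prop := c (Encodable.encode (s, t)) ≠ 0

def Branch (x : ℕ → ℕ) : Prop := ∃ y : ℕ → ℕ, ∀ n, cpred x (pref x n) (pref y n)

def Dset : Set (ℕ → ℕ) := {x | ¬ Branch x}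

/-- the tree of attempts coded by `x` against its own diagonal -/
def Tmem (x : ℕ → ℕ) (t : List ℕ) : Prop := ∀ m ≤ t.length, cpred x (pref x m) (t.take m)

lemma Tmem_take {x : ℕ → ℕ} {t : List ℕ} (h : Tmem x t) (k : ℕ) : Tmem x (t.take k) := by
  intro m hm
  rw [List.length_take] at hm
  rw [List.take_take, min_eq_left (le_trans hm (min_le_left _ _))]
  exact h m (le_trans hm (min_le_right _ _))

lemma pref_getD {x : ℕ → ℕ} {i n : ℕ} (h : i < n) : (pref x n).getD i 0 = x i := by
  simp [pref, List.getD_eq_getElem?_getD, List.getElem?_map, List.getElem?_range h]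

lemma branch_iff {x : ℕ → ℕ} : Branch x ↔ ∃ y : ℕ → ℕ, ∀ n, Tmem x (pref y n) := by
  constructor
  · rintro ⟨y, hy⟩
    refine ⟨y, fun n m hm => ?_⟩
    rw [pref_length] at hm
    rw [pref_take y hm]
    exact hy m
  · rintro ⟨y, hy⟩
    refine ⟨y, fun n => ?_⟩
    have := hy n n (by simp)
    rwa [pref_take y (le_refl n), ] at this

noncomputable def psi (x : ℕ → ℕ) : LOCode :=
  (fun n => tb (∃ t : List ℕ, Encodable.encode t = n ∧ Tmem x t),
   fun p => tb (∃ s t : List ℕ, Encodable.encode s = p.1 ∧ Encodable.encode t = p.2 ∧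
      Tmem x s ∧ Tmem x t ∧ kbLE s t))

lemma psi_dom_iff {x : ℕ → ℕ} {n : ℕ} :
    (psi x).dom n ↔ ∃ t : List ℕ, Encodable.encode t = n ∧ Tmem x t := by
  rw [LOCode.dom, psi]; exact tb_iff

lemma psi_le_iff {x : ℕ → ℕ} {m n : ℕ} :
    (psi x).le m n ↔ ∃ s t : List ℕ, Encodable.encode s = m ∧ Encodable.encode t = n ∧
      Tmem x s ∧ Tmem x t ∧ kbLE s t := by
  rw [LOCode.le, psi]; exact tb_iff

lemma enc_inj : Function.Injective (Encodable.encode : List ℕ → ℕ) :=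
  Encodable.encode_injective

lemma psi_isLO (x : ℕ → ℕ) : (psi x).IsLO := by
  refine ⟨?_, ?_, ?_, ?_, ?_⟩
  · intro m n h
    obtain ⟨s, t, hs, ht, hms, hmt, _⟩ := psi_le_iff.1 h
    exact ⟨psi_dom_iff.2 ⟨s, hs, hms⟩, psi_dom_iff.2 ⟨t, ht, hmt⟩⟩
  · intro m h
    obtain ⟨t, ht, hmt⟩ := psi_dom_iff.1 h
    exact psi_le_iff.2 ⟨t, t, ht, ht, hmt, hmt, Or.inl rfl⟩
  · intro m n h h'
    obtain ⟨s, t, hs, ht, _, _, hle⟩ := psi_le_iff.1 h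
    obtain ⟨s', t', hs', ht', _, _, hle'⟩ := psi_le_iff.1 h'
    have e1 : s' = t := enc_inj (hs'.trans ht.symm)
    have e2 : t' = s := enc_inj (ht'.trans hs.symm)
    subst e1; subst e2
    rw [← hs, ← ht, kbLE_antisymm hle hle']
  · intro m n k h h'
    obtain ⟨s, t, hs, ht, hms, hmt, hle⟩ := psi_le_iff.1 h
    obtain ⟨s', t', hs', ht', _, hmt', hle'⟩ := psi_le_iff.1 h'
    have e1 : s' = t := enc_inj (hs'.trans ht.symm)
    subst e1
    exact psi_le_iff.2 ⟨s, t', hs, ht', hms, hmt', kbLE_trans hle hle'⟩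
  · intro m n hm hn
    obtain ⟨s, hs, hms⟩ := psi_dom_iff.1 hm
    obtain ⟨t, ht, hmt⟩ := psi_dom_iff.1 hn
    rcases kb_total s t with h | h
    · exact Or.inl (psi_le_iff.2 ⟨s, t, hs, ht, hms, hmt, h⟩)
    · exact Or.inr (psi_le_iff.2 ⟨t, s, ht, hs, hmt, hms, h⟩)

/-- dependent-choice style descending sequence -/
lemma exists_descending {S : Set ℕ} (hS : S.Nonempty) {P : ℕ → ℕ → Prop}
    (H : ∀ a ∈ S, ∃ b ∈ S, P b a) :
    ∃ f : ℕ → ℕ, (∀ n, f n ∈ S) ∧ ∀ n, P (f (n+1)) (f n) := by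
  classical
  choose g hg1 hg2 using H
  obtain ⟨a0, ha0⟩ := hS
  let F : ℕ → {a // a ∈ S} := fun n =>
    Nat.rec ⟨a0, ha0⟩ (fun _ p => ⟨g p.1 p.2, hg1 p.1 p.2⟩) n
  exact ⟨fun n => (F n).1, fun n => (F n).2, fun n => hg2 _ _⟩

lemma psi_isWO_of_mem {x : ℕ → ℕ} (hx : x ∈ Dset) : (psi x).IsWO := by
  refine ⟨psi_isLO x, fun S hS hSdom => ?_⟩
  by_contra hno
  push_neg at hno
  have H : ∀ a ∈ S, ∃ b ∈ S, ((psi x).le b a ∧ ¬ (psi x).le a b) := by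
    intro a ha
    obtain ⟨b, hb, hab⟩ := hno a ha
    rcases (psi_isLO x).2.2.2.2 a b (hSdom a ha) (hSdom b hb) with h | h
    · exact absurd h hab
    · exact ⟨b, hb, h, hab⟩
  obtain ⟨f, hfS, hfd⟩ := exists_descending (hS) H
  -- decode to lists
  have hdom : ∀ n, ∃ t : List ℕ, Encodable.encode t = f n ∧ Tmem x t :=
    fun n => psi_dom_iff.1 (hSdom _ (hfS n))
  choose t ht hTt using hdom
  have hdesc : ∀ n, kbLT (t (n+1)) (t n) := by
    intro n
    obtain ⟨s', t', hs', ht', _, _, hle⟩ := psi_le_iff.1 (hfd n).1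
    have e1 : s' = t (n+1) := enc_inj (hs'.trans (ht (n+1)).symm)
    have e2 : t' = t n := enc_inj (ht'.trans (ht n).symm)
    subst e1; subst e2
    refine kbLT_of_kbLE_ne hle (fun he => ?_)
    have : f (n+1) = f n := by rw [← ht (n+1), ← ht n, he]
    have hrefl : (psi x).le (f n) (f (n+1)) := by
      rw [this]
      exact (psi_isLO x).2.1 _ (hSdom _ (hfS n))
    exact (hfd n).2 hrefl
  obtain ⟨y, hy⟩ := branch_of_descending (T := {t | Tmem x t})
    (fun u hu k => Tmem_take hu k) t hTt hdesc
  exact hx (branch_iff.2 ⟨y, hy⟩)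

lemma psi_not_isWO_of_notMem {x : ℕ → ℕ} (hx : x ∉ Dset) : ¬ (psi x).IsWO := by
  have hbr : Branch x := not_not.1 hx
  obtain ⟨y, hy⟩ := branch_iff.1 hbr
  rintro ⟨-, hwo⟩
  set S : Set ℕ := Set.range (fun n => Encodable.encode (pref y n)) with hSdef
  have hSdom : ∀ n ∈ S, (psi x).dom n := by
    rintro n ⟨m, rfl⟩
    exact psi_dom_iff.2 ⟨pref y m, rfl, hy m⟩
  obtain ⟨m0, hm0S, hleast⟩ := hwo S ⟨_, ⟨0, rfl⟩⟩ hSdom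
  obtain ⟨k, hk⟩ := hm0S
  have h1 : (psi x).le m0 (Encodable.encode (pref y (k+1))) := hleast _ ⟨k+1, rfl⟩
  rw [← hk] at h1
  obtain ⟨s', t', hs', ht', _, _, hle⟩ := psi_le_iff.1 h1
  have e1 : s' = pref y k := enc_inj hs'
  have e2 : t' = pref y (k+1) := enc_inj ht'
  subst e1; subst e2
  have : pref y k = pref y (k+1) := by
    rcases hle with h | h
    · exact h
    · exfalso
      exact kbLT_asymm h (kbLT_of_prefix (pref_prefix y (by omega))
        (fun he => by simpa using congrArg List.length he))
  simpa using congrArg List.length this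

lemma psi_isWO_iff {x : ℕ → ℕ} : (psi x).IsWO ↔ x ∈ Dset := by
  constructor
  · intro h
    by_contra hx
    exact psi_not_isWO_of_notMem hx h
  · exact psi_isWO_of_mem



lemma continuous_of_locally_constant {f : (ℕ → ℕ) → Bool}
    (h : ∀ x, ∃ F : Finset ℕ, ∀ y, (∀ i ∈ F, y i = x i) → f y = f x) : Continuous f := by
  rw [continuous_iff_continuousAt]
  intro x
  obtain ⟨F, hF⟩ := h x
  have hopen : IsOpen {y : ℕ → ℕ | ∀ i ∈ F, y i = x i} := by
    have he : {y : ℕ → ℕ | ∀ i ∈ F, y i = x i} = ⋂ i ∈ F, (fun y : ℕ → ℕ => y i) ⁻¹' {x i} := by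
      ext y; simp
    rw [he]
    exact isOpen_biInter_finset fun i _ =>
      IsOpen.preimage (continuous_apply i) (isOpen_discrete ({x i} : Set ℕ))
  have hmem : ∀ᶠ y in nhds x, f y = f x :=
    Filter.eventually_of_mem (hopen.mem_nhds (by simp)) hF
  rw [ContinuousAt, nhds_discrete Bool, Filter.tendsto_pure]
  exact hmem

lemma pref_congr {x y : ℕ → ℕ} {m : ℕ} (h : ∀ i < m, y i = x i) : pref y m = pref x m := by
  simp only [pref]
  exact List.map_congr_left (fun a ha => h a (List.mem_range.1 ha))

/-- `Tmem · t` only depends on finitely many coordinates. -/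
lemma tmem_finset (x : ℕ → ℕ) (t : List ℕ) : ∃ F : Finset ℕ,
    ∀ y, (∀ i ∈ F, y i = x i) → (Tmem y t ↔ Tmem x t) := by
  refine ⟨Finset.range t.length ∪ (Finset.range (t.length + 1)).image
    (fun m => Encodable.encode (pref x m, t.take m)), fun y hy => ?_⟩
  have hpref : ∀ m ≤ t.length, pref y m = pref x m := by
    intro m hm
    exact pref_congr (fun i hi => hy i (Finset.mem_union_left _ (Finset.mem_range.2 (by omega))))
  have hcp : ∀ m ≤ t.length, (cpred y (pref y m) (t.take m) ↔ cpred x (pref x m) (t.take m)) := by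
    intro m hm
    rw [cpred, cpred, hpref m hm, hy _ (Finset.mem_union_right _
      (Finset.mem_image.2 ⟨m, Finset.mem_range.2 (by omega), rfl⟩))]
  constructor
  · intro h m hm; exact (hcp m hm).1 (h m hm)
  · intro h m hm; exact (hcp m hm).2 (h m hm)

lemma continuous_psi : Continuous psi := by
  apply Continuous.prodMk
  · apply continuous_pi
    intro n
    apply continuous_of_locally_constant
    intro x
    by_cases hex : ∃ t : List ℕ, Encodable.encode t = n
    · obtain ⟨t, rfl⟩ := hex
      obtain ⟨F, hF⟩ := tmem_finset x t
      refine ⟨F, fun y hy => tb_congr ?_⟩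
      constructor
      · rintro ⟨t', ht', hmt⟩
        have e : t' = t := enc_inj ht'
        exact ⟨t, rfl, (hF y hy).1 (e ▸ hmt)⟩
      · rintro ⟨t', ht', hmt⟩
        have e : t' = t := enc_inj ht'
        exact ⟨t, rfl, (hF y hy).2 (e ▸ hmt)⟩
    · refine ⟨∅, fun y _ => tb_congr ?_⟩
      constructor
      · rintro ⟨t, ht, _htm⟩; exact absurd ⟨t, ht⟩ hex
      · rintro ⟨t, ht, _htm⟩; exact absurd ⟨t, ht⟩ hex
  · apply continuous_pi
    intro p
    apply continuous_of_locally_constant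
    intro x
    by_cases hex : ∃ s : List ℕ, Encodable.encode s = p.1
    · by_cases hex' : ∃ t : List ℕ, Encodable.encode t = p.2
      · obtain ⟨s, hs⟩ := hex
        obtain ⟨t, ht⟩ := hex'
        obtain ⟨F, hF⟩ := tmem_finset x s
        obtain ⟨G, hG⟩ := tmem_finset x t
        refine ⟨F ∪ G, fun y hy => tb_congr ?_⟩
        have hFy : ∀ i ∈ F, y i = x i := fun i hi => hy i (Finset.mem_union_left _ hi)
        have hGy : ∀ i ∈ G, y i = x i := fun i hi => hy i (Finset.mem_union_right _ hi)
        constructor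
        · rintro ⟨s', t', hs', ht', h1, h2, h3⟩
          have e1 : s' = s := enc_inj (hs'.trans hs.symm)
          have e2 : t' = t := enc_inj (ht'.trans ht.symm)
          exact ⟨s, t, hs, ht, (hF y hFy).1 (e1 ▸ h1), (hG y hGy).1 (e2 ▸ h2), e1 ▸ e2 ▸ h3⟩
        · rintro ⟨s', t', hs', ht', h1, h2, h3⟩
          have e1 : s' = s := enc_inj (hs'.trans hs.symm)
          have e2 : t' = t := enc_inj (ht'.trans ht.symm)
          exact ⟨s, t, hs, ht, (hF y hFy).2 (e1 ▸ h1), (hG y hGy).2 (e2 ▸ h2), e1 ▸ e2 ▸ h3⟩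
      · refine ⟨∅, fun y _ => tb_congr ?_⟩
        constructor
        · rintro ⟨s, t, hs, ht, _h⟩; exact absurd ⟨t, ht⟩ hex'
        · rintro ⟨s, t, hs, ht, _h⟩; exact absurd ⟨t, ht⟩ hex'
    · refine ⟨∅, fun y _ => tb_congr ?_⟩
      constructor
      · rintro ⟨s, t, hs, _h⟩; exact absurd ⟨s, hs⟩ hex
      · rintro ⟨s, t, hs, _h⟩; exact absurd ⟨s, hs⟩ hex


open MeasureTheory

lemma exists_code {S : Set (ℕ → ℕ)} (hS : AnalyticSet S) :
    ∃ c : ℕ → ℕ, ∀ x, x ∈ S ↔ ∃ y : ℕ → ℕ, ∀ n, cpred c (pref x n) (pref y n) := by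
  rw [AnalyticSet_def] at hS
  rcases hS with rfl | ⟨f, hf, hrange⟩
  · refine ⟨fun _ => 0, fun x => ?_⟩
    simp only [Set.mem_empty_iff_false, false_iff]
    rintro ⟨y, hy⟩
    exact (hy 0) rfl
  · classical
    set Good : List ℕ × List ℕ → Prop := fun p =>
      ∃ z : ℕ → ℕ, pref z p.2.length = p.2 ∧ pref (f z) p.1.length = p.1 with hGood
    set c : ℕ → ℕ := fun k =>
      if tb (∃ p : List ℕ × List ℕ, Encodable.encode p = k ∧ Good p) = true then 1 else 0
      with hcdef
    have hc : ∀ s t : List ℕ, cpred c s t ↔ Good (s, t) := by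
      intro s t
      rw [cpred, hcdef]
      constructor
      · intro h
        by_cases hb : tb (∃ p : List ℕ × List ℕ,
            Encodable.encode p = Encodable.encode (s, t) ∧ Good p) = true
        · obtain ⟨p, hp, hgp⟩ := tb_iff.1 hb
          have : p = (s, t) := Encodable.encode_injective hp
          exact this ▸ hgp
        · simp only [hb, if_false] at h
          exact absurd rfl h
      · intro h
        have hb : tb (∃ p : List ℕ × List ℕ,
            Encodable.encode p = Encodable.encode (s, t) ∧ Good p) = true :=
          tb_iff.2 ⟨(s, t), rfl, h⟩
        simp only [hb, if_true]
        exact one_ne_zero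
    refine ⟨c, fun x => ?_⟩
    constructor
    · intro hx
      rw [← hrange] at hx
      obtain ⟨z, hz⟩ := hx
      refine ⟨z, fun n => (hc _ _).2 ⟨z, ?_, ?_⟩⟩
      · rw [pref_length]
      · rw [pref_length, hz]
    · rintro ⟨y, hy⟩
      have hgood : ∀ n, ∃ z : ℕ → ℕ, pref z n = pref y n ∧ pref (f z) n = pref x n := by
        intro n
        obtain ⟨z, hz1, hz2⟩ := (hc _ _).1 (hy n)
        rw [pref_length] at hz1 hz2
        exact ⟨z, hz1, hz2⟩
      choose z hz1 hz2 using hgood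
      have htz : Filter.Tendsto z Filter.atTop (nhds y) := by
        rw [tendsto_pi_nhds]
        intro i
        rw [nhds_discrete ℕ, Filter.tendsto_pure]
        rw [Filter.eventually_atTop]
        refine ⟨i + 1, fun n hn => ?_⟩
        have e1 : (pref (z n) n).getD i 0 = z n i := pref_getD (by omega)
        have e2 : (pref y n).getD i 0 = y i := pref_getD (by omega)
        rw [hz1 n, e2] at e1
        exact e1.symm
      have h1 : Filter.Tendsto (fun n => f (z n)) Filter.atTop (nhds (f y)) :=
        (hf.tendsto y).comp htz
      have h2 : Filter.Tendsto (fun n => f (z n)) Filter.atTop (nhds x) := by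
        rw [tendsto_pi_nhds]
        intro i
        rw [nhds_discrete ℕ, Filter.tendsto_pure]
        rw [Filter.eventually_atTop]
        refine ⟨i + 1, fun n hn => ?_⟩
        have e1 : (pref (f (z n)) n).getD i 0 = f (z n) i := pref_getD (by omega)
        have e2 : (pref x n).getD i 0 = x i := pref_getD (by omega)
        rw [hz2 n, e2] at e1
        exact e1.symm
      have : x = f y := tendsto_nhds_unique h2 h1
      rw [← hrange]
      exact ⟨y, this.symm⟩

lemma Dset_not_analytic : ¬ AnalyticSet Dset := by
  intro h
  obtain ⟨c, hc⟩ := exists_code h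
  have h1 := hc c
  have h2 : c ∈ Dset ↔ ¬ Branch c := Iff.rfl
  rw [h2] at h1
  exact iff_not_self h1.symm

lemma WO_not_analytic : ¬ AnalyticSet {I : LOCode | I.IsWO} := by
  intro h
  have hpre := h.preimage continuous_psi
  have heq : psi ⁻¹' {I | I.IsWO} = Dset := by
    ext x
    simp only [Set.mem_preimage, Set.mem_setOf_eq]
    exact psi_isWO_iff
  rw [heq] at hpre
  exact Dset_not_analytic hpre


end Transfer
namespace Transfer
open MeasureTheory

lemma omegaStar_isLO : LOCode.omegaStar.IsLO := by
  refine ⟨?_, ?_, ?_, ?_, ?_⟩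
  · intro m n _
    exact ⟨rfl, rfl⟩
  · intro m _
    simp [LOCode.le, LOCode.omegaStar]
  · intro m n h h'
    simp only [LOCode.le, LOCode.omegaStar, decide_eq_true_eq] at h h'
    omega
  · intro m n k h h'
    simp only [LOCode.le, LOCode.omegaStar, decide_eq_true_eq] at h h' ⊢
    omega
  · intro m n _ _
    simp only [LOCode.le, LOCode.omegaStar, decide_eq_true_eq]
    omega

lemma embeds_omegaStar {I : LOCode} (hLO : I.IsLO) (hnWO : ¬ I.IsWO) :
    LOCode.Embeds LOCode.omegaStar I := by
  rw [LOCode.IsWO, not_and_or] at hnWO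
  rcases hnWO with h | h
  · exact absurd hLO h
  push_neg at h
  obtain ⟨S, hSne, hSdom, hno⟩ := h
  have H : ∀ a ∈ S, ∃ b ∈ S, (I.le b a ∧ ¬ I.le a b) := by
    intro a ha
    obtain ⟨b, hb, hab⟩ := hno a ha
    rcases hLO.2.2.2.2 a b (hSdom a ha) (hSdom b hb) with hc | hc
    · exact absurd hc hab
    · exact ⟨b, hb, hc, hab⟩
  obtain ⟨f, hfS, hfd⟩ := exists_descending hSne H
  have chain : ∀ a b, a ≤ b → I.le (f b) (f a) := by
    intro a b hab
    induction b, hab using Nat.le_induction with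
    | base => exact hLO.2.1 _ (hSdom _ (hfS a))
    | succ b hab ih => exact hLO.2.2.2.1 _ _ _ (hfd b).1 ih
  have hstrict : ∀ m n, m < n → ¬ I.le (f m) (f n) := by
    intro m n hmn hle
    exact (hfd m).2 (hLO.2.2.2.1 _ _ _ hle (chain (m+1) n hmn))
  refine ⟨f, fun n _ => hSdom _ (hfS n), fun m n _ _ => ?_⟩
  simp only [LOCode.le, LOCode.omegaStar, decide_eq_true_eq]
  constructor
  · exact fun hn => chain n m hn
  · intro hle
    by_contra hn
    exact hstrict m n (by omega) hle

end Transfer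

theorem transfer_of_classification_down
    {Z W : Type*} [MeasurableSpace Z] [StandardBorelSpace Z]
    [MeasurableSpace W] [StandardBorelSpace W]
    (X : Set Z) (Y : Set W) (hX : IsAnalyticSet X) (hY : IsAnalyticSet Y)
    (K : Z → W) (hKY : ∀ x ∈ X, K x ∈ Y)
    (hKan : IsAnalyticSet {p : Z × W | p.1 ∈ X ∧ p.2 = K p.1})
    (E : Set (Z × Z)) (hE : MeasurableSet E) (hEeq : IsEquivOn X E)
    (R : Set ((W × W) × LOCode)) (hRan : IsAnalyticSet R) (hRref : Refining R)
    (hRLO : ∀ p ∈ R, p.2.IsLO)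
    (hFeq : ∀ I : LOCode, I.IsWO → IsEquivOn Y (LOsection R I))
    (hFinf : LOsection R LOCode.omegaStar = ⋂ I ∈ {I : LOCode | I.IsWO}, LOsection R I)
    (h : ∀ x ∈ X, ∀ x' ∈ X,
      (K x, K x') ∈ LOsection R LOCode.omegaStar → (x, x') ∈ E) :
    ∃ I : LOCode, I.IsWO ∧ ∀ x ∈ X, ∀ x' ∈ X,
      (K x, K x') ∈ LOsection R I → (x, x') ∈ E := by
  classical
  open MeasureTheory Transfer in
  by_contra hcon
  push_neg at hcon
  -- the set of codes with a counterexample pair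
  set A : Set LOCode :=
    {I : LOCode | ∃ x ∈ X, ∃ x' ∈ X, ((K x, K x'), I) ∈ R ∧ (x, x') ∉ E} with hA
  -- A is analytic
  obtain ⟨C, g, hCm, hgm, hgC⟩ := hKan
  obtain ⟨D', r, hDm, hrm, hrD⟩ := hRan
  letI := upgradeStandardBorel W
  have hAan : AnalyticSet A := by
    set P : Set ((ℕ → ℕ) × (ℕ → ℕ) × (ℕ → ℕ)) :=
      {q | q.1 ∈ C ∧ q.2.1 ∈ C ∧ q.2.2 ∈ D' ∧ (g q.1).2 = (r q.2.2).1.1 ∧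
        (g q.2.1).2 = (r q.2.2).1.2 ∧ ((g q.1).1, (g q.2.1).1) ∉ E} with hP
    have hgm1 : Measurable fun q : (ℕ → ℕ) × (ℕ → ℕ) × (ℕ → ℕ) => g q.1 :=
      hgm.comp measurable_fst
    have hgm2 : Measurable fun q : (ℕ → ℕ) × (ℕ → ℕ) × (ℕ → ℕ) => g q.2.1 :=
      hgm.comp (measurable_fst.comp measurable_snd)
    have hrm3 : Measurable fun q : (ℕ → ℕ) × (ℕ → ℕ) × (ℕ → ℕ) => r q.2.2 :=
      hrm.comp (measurable_snd.comp measurable_snd)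
    have hdiag : MeasurableSet (Set.diagonal W) := isClosed_diagonal.measurableSet
    have hPm : MeasurableSet P := by
      refine MeasurableSet.inter (hCm.preimage measurable_fst) ?_
      refine MeasurableSet.inter (hCm.preimage (measurable_fst.comp measurable_snd)) ?_
      refine MeasurableSet.inter (hDm.preimage (measurable_snd.comp measurable_snd)) ?_
      refine MeasurableSet.inter ?_ (MeasurableSet.inter ?_ ?_)
      · exact (hgm1.snd.prodMk hrm3.fst.fst) hdiag
      · exact (hgm2.snd.prodMk (hrm3.fst.snd)) hdiag
      · exact ((hgm1.fst.prodMk hgm2.fst) hE.compl)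
    have hmm : Measurable fun q : (ℕ → ℕ) × (ℕ → ℕ) × (ℕ → ℕ) => (r q.2.2).2 := hrm3.snd
    have himg : A = (fun q : (ℕ → ℕ) × (ℕ → ℕ) × (ℕ → ℕ) => (r q.2.2).2) '' P := by
      ext I
      constructor
      · rintro ⟨x, hx, x', hx', hRmem, hEmem⟩
        have h1 : (x, K x) ∈ g '' C := by rw [hgC]; exact ⟨hx, rfl⟩
        have h2 : (x', K x') ∈ g '' C := by rw [hgC]; exact ⟨hx', rfl⟩
        have h3 : ((K x, K x'), I) ∈ r '' D' := by rw [hrD]; exact hRmem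
        obtain ⟨c, hc, hc2⟩ := h1
        obtain ⟨c', hc', hc2'⟩ := h2
        obtain ⟨d, hd, hd2⟩ := h3
        refine ⟨(c, c', d), ⟨hc, hc', hd, ?_, ?_, ?_⟩, ?_⟩
        · show (g c).2 = (r d).1.1
          rw [hc2, hd2]
        · show (g c').2 = (r d).1.2
          rw [hc2', hd2]
        · show ((g c).1, (g c').1) ∉ E
          rw [hc2, hc2']; exact hEmem
        · show (r d).2 = I
          rw [hd2]
      · rintro ⟨⟨c, c', d⟩, ⟨hc, hc', hd, he1, he2, hne⟩, rfl⟩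
        have h1 : g c ∈ {p : Z × W | p.1 ∈ X ∧ p.2 = K p.1} := by
          rw [← hgC]; exact Set.mem_image_of_mem g hc
        have h2 : g c' ∈ {p : Z × W | p.1 ∈ X ∧ p.2 = K p.1} := by
          rw [← hgC]; exact Set.mem_image_of_mem g hc'
        have h3 : r d ∈ R := by rw [← hrD]; exact Set.mem_image_of_mem r hd
        obtain ⟨hx1, hk1⟩ := h1
        obtain ⟨hx2, hk2⟩ := h2
        refine ⟨(g c).1, hx1, (g c').1, hx2, ?_, hne⟩
        have : ((K (g c).1, K (g c').1), (r d).2) = r d := by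
          rw [← hk1, ← hk2, he1, he2]
        rw [this]
        exact h3
    rw [himg]
    exact hPm.analyticSet_image hmm
  -- every well-order code is in A
  have hWOsub : {I : LOCode | I.IsWO} ⊆ A := by
    intro I hI
    obtain ⟨x, hx, x', hx', hmem, hne⟩ := hcon I hI
    exact ⟨x, hx, x', hx', hmem, hne⟩
  -- A contains a non-well-order code
  have hnotsub : ¬ A ⊆ {I : LOCode | I.IsWO} := by
    intro hsub
    exact WO_not_analytic (Set.Subset.antisymm hWOsub hsub ▸ hAan)
  obtain ⟨I, hIA, hInWO⟩ := Set.not_subset.1 hnotsub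
  obtain ⟨x, hx, x', hx', hmem, hne⟩ := hIA
  have hILO : I.IsLO := hRLO _ hmem
  have hembed : LOCode.Embeds LOCode.omegaStar I := embeds_omegaStar hILO hInWO
  have hsub2 : LOsection R I ⊆ LOsection R LOCode.omegaStar :=
    hRref LOCode.omegaStar I omegaStar_isLO hILO hembed
  exact hne (h x hx x' hx' (hsub2 hmem))
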